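/- Let q ∈ ℂ with q ≠ 0 and q² ≠ 1, set ω = q − q⁻¹, let m ≥ 1 and let μ₁, …, μ_m ∈ ℂ be pairwise distinct. Define T(X) := −ω⁻¹ · (∏_{i=1}^{m} (1 − μ_i X) · (∏_{i=1}^{m} (1 − q⁻² μ_i X))⁻¹ − 1) ∈ ℂ[[X]], where the inverse is taken in the ring of formal power series. Then for every n ≥ 1 the coefficient of Xⁿ in T(X) equals Σ_{i=1}^{m} (q⁻² μ_i)ⁿ d̃_i(μ), where d̃_i(μ) = q ∏_{j≠i} (μ_i − q² μ_j)/(μ_i − μ_j). -/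

import Mathlib

lemma geom_mul (a : ℂ) :
    (PowerSeries.mk fun n => a ^ n) * (1 - PowerSeries.C a * PowerSeries.X) = 1 := by
  ext n
  rw [mul_sub, mul_one, map_sub, mul_left_comm, PowerSeries.coeff_C_mul]
  cases n with
  | zero => simp
  | succ k =>
    rw [PowerSeries.coeff_succ_mul_X, PowerSeries.coeff_mk, PowerSeries.coeff_mk]
    simp [pow_succ, mul_comm]


lemma keyPoly (q : ℂ) (hq : q ≠ 0) (hq2 : q ^ 2 ≠ 1) {m : ℕ} (μ : Fin m → ℂ)
    (hμ : Function.Injective μ) (s : Finset (Fin m)) (hs : ∀ i ∈ s, μ i ≠ 0) :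
    (∏ i ∈ s, (1 - Polynomial.C (μ i) * Polynomial.X))
      - ∏ i ∈ s, (1 - Polynomial.C (q⁻¹ ^ 2 * μ i) * Polynomial.X)
    = - Polynomial.C (q - q⁻¹) * ∑ i ∈ s,
        Polynomial.C ((q * ∏ j ∈ s.erase i, (μ i - q ^ 2 * μ j) / (μ i - μ j)) * (q⁻¹ ^ 2 * μ i))
          * Polynomial.X
          * ∏ j ∈ s.erase i, (1 - Polynomial.C (q⁻¹ ^ 2 * μ j) * Polynomial.X) := by
  classical
  rw [← sub_eq_zero]
  set roots : Finset ℂ := insert 0 (s.image fun i => q ^ 2 / μ i) with hroots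
  apply Polynomial.eq_zero_of_natDegree_lt_card_of_eval_eq_zero' _ roots
  · intro r hr
    rw [Polynomial.eval_sub, sub_eq_zero]
    simp only [hroots, Finset.mem_insert, Finset.mem_image] at hr
    rcases hr with rfl | ⟨i, hi, rfl⟩
    · simp only [Polynomial.eval_sub, Polynomial.eval_prod, Polynomial.eval_mul,
        Polynomial.eval_one, Polynomial.eval_C, Polynomial.eval_X, Polynomial.eval_neg,
        Polynomial.eval_finset_sum, mul_zero, zero_mul, sub_zero, sub_self,
        Finset.sum_const_zero]
    · have hμi : μ i ≠ 0 := hs i hi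
      set r := q ^ 2 / μ i with hrdef
      have hzero : 1 - q⁻¹ ^ 2 * μ i * r = 0 := by
        rw [hrdef]; field_simp; ring
      simp only [Polynomial.eval_sub, Polynomial.eval_prod, Polynomial.eval_mul,
        Polynomial.eval_one, Polynomial.eval_C, Polynomial.eval_X, Polynomial.eval_neg,
        Polynomial.eval_finset_sum]
      have h2 : ∏ j ∈ s, (1 - q⁻¹ ^ 2 * μ j * r) = 0 := Finset.prod_eq_zero hi hzero
      rw [h2, sub_zero]
      rw [Finset.sum_eq_single_of_mem i hi (fun k hk hki => by
        have : ∏ j ∈ s.erase k, (1 - q⁻¹ ^ 2 * μ j * r) = 0 :=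
          Finset.prod_eq_zero (Finset.mem_erase.2 ⟨Ne.symm hki, hi⟩) hzero
        rw [this]; ring)]
      have key : ∀ j ∈ s.erase i, (1 - μ j * r)
          = (μ i - q ^ 2 * μ j) / (μ i - μ j) * (1 - q⁻¹ ^ 2 * μ j * r) := by
        intro j hj
        have hij : μ i - μ j ≠ 0 :=
          sub_ne_zero.2 fun h => (Finset.mem_erase.1 hj).1 (hμ h).symm
        rw [hrdef]
        field_simp
      have hLP : ∏ j ∈ s.erase i, (1 - μ j * r)
          = (∏ j ∈ s.erase i, (μ i - q ^ 2 * μ j) / (μ i - μ j))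
            * ∏ j ∈ s.erase i, (1 - q⁻¹ ^ 2 * μ j * r) := by
        rw [← Finset.prod_mul_distrib]; exact Finset.prod_congr rfl key
      rw [← Finset.mul_prod_erase s (fun j => 1 - μ j * r) hi, hLP]
      have hc : (1 - μ i * r) = -(q - q⁻¹) * (q * (q⁻¹ ^ 2 * μ i) * r) := by
        rw [hrdef]; field_simp; ring
      linear_combination ((∏ j ∈ s.erase i, (μ i - q ^ 2 * μ j) / (μ i - μ j))
        * ∏ j ∈ s.erase i, (1 - q⁻¹ ^ 2 * μ j * r)) * hc
  · have hcard : roots.card = s.card + 1 := by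
      rw [hroots, Finset.card_insert_of_notMem, Finset.card_image_of_injOn, Nat.add_comm]
      · intro a ha b hb hab
        apply hμ
        have ha' := hs a ha
        have hb' := hs b hb
        field_simp at hab
        exact hab.symm
      · simp only [Finset.mem_image, not_exists]
        intro i
        rintro ⟨hi, h0⟩
        exact (div_ne_zero (pow_ne_zero 2 hq) (hs i hi)) h0
    rw [hcard, Nat.lt_succ_iff]
    have hdeg1 : ∀ a : ℂ, (1 - Polynomial.C a * Polynomial.X).natDegree ≤ 1 := fun a => by
      refine le_trans (Polynomial.natDegree_sub_le _ _) ?_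
      simp only [Polynomial.natDegree_one, max_le_iff]
      exact ⟨Nat.zero_le 1, le_trans (Polynomial.natDegree_C_mul_le _ _) (by simp)⟩
    have hprod : ∀ (t : Finset (Fin m)) (g : Fin m → ℂ),
        (∏ i ∈ t, (1 - Polynomial.C (g i) * Polynomial.X)).natDegree ≤ t.card := by
      intro t g
      refine le_trans (Polynomial.natDegree_prod_le _ _) ?_
      refine le_trans (Finset.sum_le_card_nsmul t _ 1 fun i _ => hdeg1 _) (by simp)
    refine le_trans (Polynomial.natDegree_sub_le _ _) (max_le ?_ ?_)
    · refine le_trans (Polynomial.natDegree_sub_le _ _) (max_le (hprod s μ) (hprod s _))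
    · rw [neg_mul]
      rw [Polynomial.natDegree_neg]
      refine le_trans (Polynomial.natDegree_C_mul_le _ _) ?_
      refine Polynomial.natDegree_sum_le_of_forall_le _ _ fun i hi => ?_
      have h1 : 1 ≤ s.card := Finset.card_pos.2 ⟨i, hi⟩
      refine le_trans (Polynomial.natDegree_mul_le) ?_
      have ht : (Polynomial.C ((q * ∏ j ∈ s.erase i, (μ i - q ^ 2 * μ j) / (μ i - μ j))
          * (q⁻¹ ^ 2 * μ i)) * Polynomial.X).natDegree ≤ 1 :=
        le_trans (Polynomial.natDegree_C_mul_le _ _) (by simp)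
      have hp : (∏ j ∈ s.erase i,
          (1 - Polynomial.C (q⁻¹ ^ 2 * μ j) * Polynomial.X)).natDegree ≤ (s.erase i).card :=
        le_trans (Polynomial.natDegree_prod_le _ _)
          (le_trans (Finset.sum_le_card_nsmul _ _ 1 fun j _ => hdeg1 _) (by simp))
      rw [Finset.card_erase_of_mem hi] at hp
      omega

lemma keyPolyUniv (q : ℂ) (hq : q ≠ 0) (hq2 : q ^ 2 ≠ 1) {m : ℕ} (μ : Fin m → ℂ)
    (hμ : Function.Injective μ) :
    (∏ i : Fin m, (1 - Polynomial.C (μ i) * Polynomial.X))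
      - ∏ i : Fin m, (1 - Polynomial.C (q⁻¹ ^ 2 * μ i) * Polynomial.X)
    = - Polynomial.C (q - q⁻¹) * ∑ i : Fin m,
        Polynomial.C ((q * ∏ j ∈ Finset.univ.erase i, (μ i - q ^ 2 * μ j) / (μ i - μ j))
          * (q⁻¹ ^ 2 * μ i))
          * Polynomial.X
          * ∏ j ∈ Finset.univ.erase i, (1 - Polynomial.C (q⁻¹ ^ 2 * μ j) * Polynomial.X) := by
  classical
  set s : Finset (Fin m) := Finset.univ.filter (fun i => μ i ≠ 0) with hsdef
  have hmem : ∀ i, i ∈ s ↔ μ i ≠ 0 := by intro i; simp [hsdef]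
  have hs : ∀ i ∈ s, μ i ≠ 0 := fun i hi => (hmem i).1 hi
  -- products over univ reduce to products over s
  have hN : (∏ i : Fin m, (1 - Polynomial.C (μ i) * Polynomial.X))
      = ∏ i ∈ s, (1 - Polynomial.C (μ i) * Polynomial.X) := by
    refine (Finset.prod_subset (Finset.subset_univ s) fun x _ hx => ?_).symm
    have : μ x = 0 := by simpa [hmem] using hx
    simp [this]
  have hD : (∏ i : Fin m, (1 - Polynomial.C (q⁻¹ ^ 2 * μ i) * Polynomial.X))
      = ∏ i ∈ s, (1 - Polynomial.C (q⁻¹ ^ 2 * μ i) * Polynomial.X) := by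
    refine (Finset.prod_subset (Finset.subset_univ s) fun x _ hx => ?_).symm
    have : μ x = 0 := by simpa [hmem] using hx
    simp [this]
  have hsum : (∑ i : Fin m,
        Polynomial.C ((q * ∏ j ∈ Finset.univ.erase i, (μ i - q ^ 2 * μ j) / (μ i - μ j))
          * (q⁻¹ ^ 2 * μ i))
          * Polynomial.X
          * ∏ j ∈ Finset.univ.erase i, (1 - Polynomial.C (q⁻¹ ^ 2 * μ j) * Polynomial.X))
      = ∑ i ∈ s,
        Polynomial.C ((q * ∏ j ∈ s.erase i, (μ i - q ^ 2 * μ j) / (μ i - μ j))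
          * (q⁻¹ ^ 2 * μ i))
          * Polynomial.X
          * ∏ j ∈ s.erase i, (1 - Polynomial.C (q⁻¹ ^ 2 * μ j) * Polynomial.X) := by
    rw [← Finset.sum_subset (Finset.subset_univ s)]
    · refine Finset.sum_congr rfl fun i hi => ?_
      have hμi : μ i ≠ 0 := hs i hi
      have hsub : s.erase i ⊆ Finset.univ.erase i :=
        Finset.erase_subset_erase _ (Finset.subset_univ s)
      have hP : (∏ j ∈ Finset.univ.erase i, (μ i - q ^ 2 * μ j) / (μ i - μ j))
          = ∏ j ∈ s.erase i, (μ i - q ^ 2 * μ j) / (μ i - μ j) := by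
        refine (Finset.prod_subset hsub fun x hx hx' => ?_).symm
        have hxi : x ≠ i := (Finset.mem_erase.1 hx).1
        have : μ x = 0 := by
          by_contra h
          exact hx' (Finset.mem_erase.2 ⟨hxi, (hmem x).2 h⟩)
        rw [this]
        field_simp
        simp
      have hQ : (∏ j ∈ Finset.univ.erase i, (1 - Polynomial.C (q⁻¹ ^ 2 * μ j) * Polynomial.X))
          = ∏ j ∈ s.erase i, (1 - Polynomial.C (q⁻¹ ^ 2 * μ j) * Polynomial.X) := by
        refine (Finset.prod_subset hsub fun x hx hx' => ?_).symm
        have hxi : x ≠ i := (Finset.mem_erase.1 hx).1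
        have : μ x = 0 := by
          by_contra h
          exact hx' (Finset.mem_erase.2 ⟨hxi, (hmem x).2 h⟩)
        simp [this]
      rw [hP, hQ]
    · intro x _ hx
      have : μ x = 0 := by simpa [hmem] using hx
      simp [this]
  rw [hN, hD, hsum]
  exact keyPoly q hq hq2 μ hμ s hs

lemma keyPS (q : ℂ) (hq : q ≠ 0) (hq2 : q ^ 2 ≠ 1) {m : ℕ} (μ : Fin m → ℂ)
    (hμ : Function.Injective μ) :
    (∏ i : Fin m, (1 - PowerSeries.C (μ i) * PowerSeries.X))
      - ∏ i : Fin m, (1 - PowerSeries.C (q⁻¹ ^ 2 * μ i) * PowerSeries.X)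
    = - PowerSeries.C (q - q⁻¹) * ∑ i : Fin m,
        PowerSeries.C ((q * ∏ j ∈ Finset.univ.erase i, (μ i - q ^ 2 * μ j) / (μ i - μ j))
          * (q⁻¹ ^ 2 * μ i))
          * PowerSeries.X
          * ∏ j ∈ Finset.univ.erase i, (1 - PowerSeries.C (q⁻¹ ^ 2 * μ j) * PowerSeries.X) := by
  have h := congrArg (Polynomial.aeval (PowerSeries.X : PowerSeries ℂ))
    (keyPolyUniv q hq hq2 μ hμ)
  simpa only [map_sub, map_mul, map_sum, map_prod, map_one, map_neg,
    Polynomial.aeval_X, Polynomial.aeval_C, PowerSeries.algebraMap_apply,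
    Algebra.algebraMap_self, RingHom.id_apply] using h


open Finset PowerSeries

/-- spectral parameterization of the power sums of the second kind:
the `n`-th coefficient of `T(X) = −ω⁻¹·(∏(1−μᵢX)·(∏(1−q⁻²μᵢX))⁻¹ − 1)` equals
`Σᵢ (q⁻²μᵢ)ⁿ d̃ᵢ(μ)` with `d̃ᵢ(μ) = q ∏_{j≠i} (μᵢ − q²μⱼ)/(μᵢ − μⱼ)`. -/
theorem stmt_7 (q : ℂ) (hq : q ≠ 0) (hq2 : q ^ 2 ≠ 1) (ω : ℂ) (hω : ω = q - q⁻¹)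
    (m : ℕ) (hm : 1 ≤ m) (μ : Fin m → ℂ) (hμ : Function.Injective μ)
    (T : PowerSeries ℂ)
    (hT : T = -C ω⁻¹ *
      ((∏ i, (1 - C (μ i) * X)) * (∏ i, (1 - C (q⁻¹ ^ 2 * μ i) * X))⁻¹ - 1)) :
    ∀ n : ℕ, 1 ≤ n →
      coeff n T = ∑ i, (q⁻¹ ^ 2 * μ i) ^ n *
        (q * ∏ j ∈ univ.erase i, (μ i - q ^ 2 * μ j) / (μ i - μ j)) := by
  intro n hn
  classical
  set ν : Fin m → ℂ := fun i => q⁻¹ ^ 2 * μ i with hν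
  set d : Fin m → ℂ := fun i => q * ∏ j ∈ univ.erase i, (μ i - q ^ 2 * μ j) / (μ i - μ j)
    with hd
  set N : PowerSeries ℂ := ∏ i, (1 - C (μ i) * X) with hN
  set D : PowerSeries ℂ := ∏ i, (1 - C (ν i) * X) with hD
  have hω0 : ω ≠ 0 := by
    rw [hω]
    intro h
    apply hq2
    have : q * (q - q⁻¹) = 0 := by rw [h, mul_zero]
    rw [mul_sub, mul_inv_cancel₀ hq] at this
    have : q * q = 1 := by linear_combination this
    rw [sq]; exact this
  have hDc : PowerSeries.constantCoeff D = 1 := by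
    rw [hD, map_prod]
    refine Finset.prod_eq_one fun i _ => ?_
    simp
  have hDne : D ≠ 0 := fun h => by simp [h] at hDc
  have hDinv : D⁻¹ * D = 1 := PowerSeries.inv_mul_cancel D (by rw [hDc]; exact one_ne_zero)
  -- geometric series
  have hmk : ∀ i : Fin m, (PowerSeries.mk fun k => ν i ^ k) * D
      = ∏ j ∈ univ.erase i, (1 - C (ν j) * X) := by
    intro i
    rw [hD, ← Finset.mul_prod_erase univ _ (Finset.mem_univ i), ← mul_assoc, geom_mul, one_mul]
  have hDsplit : ∀ i : Fin m, D = (1 - C (ν i) * X) * ∏ j ∈ univ.erase i,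
      (1 - C (ν j) * X) := fun i =>
    (Finset.mul_prod_erase univ _ (Finset.mem_univ i)).symm
  set G : PowerSeries ℂ := C (-∑ i, d i) + ∑ i, C (d i) * PowerSeries.mk fun k => ν i ^ k
    with hG
  have key : N - D = - C ω * ∑ i, C (d i * ν i) * X * ∏ j ∈ univ.erase i,
      (1 - C (ν j) * X) := by
    rw [hω]
    exact keyPS q hq hq2 μ hμ
  have hTG : T = G := by
    apply mul_right_cancel₀ hDne
    rw [hT]
    have e1 : -C ω⁻¹ * (N * D⁻¹ - 1) * D = -C ω⁻¹ * (N - D) := by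
      rw [mul_assoc, sub_mul, one_mul, mul_assoc, hDinv, mul_one]
    rw [e1, key, ← mul_assoc, neg_mul_neg, ← map_mul, inv_mul_cancel₀ hω0,
      map_one, one_mul]
    rw [hG, add_mul, Finset.sum_mul]
    have e2 : ∀ i : Fin m, C (d i) * (PowerSeries.mk fun k => ν i ^ k) * D
        = C (d i) * ∏ j ∈ univ.erase i, (1 - C (ν j) * X) := by
      intro i
      rw [mul_assoc, hmk]
    rw [Finset.sum_congr rfl fun i _ => e2 i]
    have e3 : C (-∑ i, d i) * D = -∑ i : Fin m, C (d i) * D := by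
      rw [map_neg, map_sum, neg_mul, Finset.sum_mul]
    rw [e3, neg_add_eq_sub, ← Finset.sum_sub_distrib]
    refine Finset.sum_congr rfl fun i _ => ?_
    rw [map_mul, hDsplit i]
    ring
  rw [hTG, hG, map_add, map_sum]
  rw [PowerSeries.coeff_C, if_neg (by omega)]
  simp only [PowerSeries.coeff_C_mul, PowerSeries.coeff_mk]
  rw [zero_add]
  exact Finset.sum_congr rfl fun i _ => mul_comm _ _
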